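/- Let X ⊆ ℝ^s be compact, f : X → ℝ^p continuous, M_0 a p×p positive semidefinite symmetric real matrix, and a ∈ (0,1). For a Borel probability measure ξ on X let M(ξ) = ∫_X f(x) f(x)ᵀ dξ(x) and R(ξ) = a·M(ξ) + (1−a)·M_0. Let ξ* be a Borel probability measure on X with R(ξ*) positive definite. Then the following are equivalent: (i) ξ* maximizes det R(ξ) over all Borel probability measures ξ on X; (ii) for every x ∈ X, f(x)ᵀ R(ξ*)⁻¹ f(x) ≤ trace( M(ξ*) R(ξ*)⁻¹ ). -/

import Mathlib

open Matrix MeasureTheory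

/-- Information matrix `M(ξ) = ∫ f(x) f(x)ᵀ dξ(x)` of a design `ξ` on `X`. -/
noncomputable def infoM {s p : ℕ} {X : Set (Fin s → ℝ)} (f : X → Fin p → ℝ)
    (ξ : Measure X) : Matrix (Fin p) (Fin p) ℝ :=
  Matrix.of fun i j => ∫ x, f x i * f x j ∂ξ

/-- Augmented information matrix `R(ξ) = a M(ξ) + (1 − a) M₀`. -/
noncomputable def augM {s p : ℕ} {X : Set (Fin s → ℝ)} (f : X → Fin p → ℝ)
    (M0 : Matrix (Fin p) (Fin p) ℝ) (a : ℝ) (ξ : Measure X) :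
    Matrix (Fin p) (Fin p) ℝ :=
  a • infoM f ξ + (1 - a) • M0

section matrixAux
set_option linter.unusedSectionVars false

/-- trace of a hermitian real matrix is the sum of eigenvalues -/
lemma trace_eq_sum_eig {p : ℕ} {S : Matrix (Fin p) (Fin p) ℝ} (hS : S.IsHermitian) :
    S.trace = ∑ i, hS.eigenvalues i := by
  simpa using hS.trace_eq_sum_eigenvalues

lemma psd_det_le_exp {p : ℕ} {S : Matrix (Fin p) (Fin p) ℝ} (hS : S.PosSemidef) :
    S.det ≤ Real.exp (S.trace - p) := by
  have h1 := hS.1.det_eq_prod_eigenvalues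
  rw [h1, trace_eq_sum_eig hS.1]
  have : ∀ i ∈ Finset.univ, hS.1.eigenvalues i ≤ Real.exp (hS.1.eigenvalues i - 1) := by
    intro i _
    have := Real.add_one_le_exp (hS.1.eigenvalues i - 1)
    linarith
  calc ∏ i, hS.1.eigenvalues i ≤ ∏ i, Real.exp (hS.1.eigenvalues i - 1) :=
        Finset.prod_le_prod (fun i _ => hS.eigenvalues_nonneg i) this
    _ = Real.exp (∑ i, (hS.1.eigenvalues i - 1)) := by rw [Real.exp_sum]
    _ = Real.exp ((∑ i, hS.1.eigenvalues i) - p) := by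
        rw [Finset.sum_sub_distrib]; simp

open scoped MatrixOrder in
lemma det_le_det_mul_exp {p : ℕ} {A B : Matrix (Fin p) (Fin p) ℝ}
    (hA : A.PosDef) (hB : B.PosSemidef) :
    B.det ≤ A.det * Real.exp ((A⁻¹ * B).trace - p) := by
  set s := CFC.sqrt A with hs
  have hss : s * s = A := CFC.sqrt_mul_sqrt_self A hA.posSemidef.nonneg
  have hdets : s.det * s.det = A.det := by rw [← Matrix.det_mul, hss]
  have hdetsne : s.det ≠ 0 := fun h => by
    rw [h, mul_zero] at hdets; exact (hA.det_pos).ne' hdets.symm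
  have hsherm : s.IsHermitian := (CFC.sqrt_nonneg A).posSemidef.1
  have hinvherm : (s⁻¹).IsHermitian := hsherm.inv
  set S := s⁻¹ * B * s⁻¹ with hS
  have hSpsd : S.PosSemidef := by
    have := hB.conjTranspose_mul_mul_same (s⁻¹)
    rwa [Matrix.IsHermitian.eq hinvherm] at this
  have hsinv : s * s⁻¹ = 1 := Matrix.mul_nonsing_inv s (isUnit_iff_ne_zero.mpr hdetsne)
  have hB' : B = s * S * s := by
    rw [hS, ← mul_assoc, ← mul_assoc, hsinv, one_mul, mul_assoc, Matrix.nonsing_inv_mul s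
      (isUnit_iff_ne_zero.mpr hdetsne), mul_one]
  have hdetB : B.det = A.det * S.det := by
    rw [hB', Matrix.det_mul, Matrix.det_mul, ← hdets]; ring
  have htr : S.trace = (A⁻¹ * B).trace := by
    rw [hS, Matrix.trace_mul_comm, ← mul_assoc, ← Matrix.mul_inv_rev, hss]
  rw [hdetB, ← htr]
  exact mul_le_mul_of_nonneg_left (psd_det_le_exp hSpsd) hA.det_pos.le

lemma trace_nonpos_of_det_le {p : ℕ} {C : Matrix (Fin p) (Fin p) ℝ}
    (h : ∀ t : ℝ, t ∈ Set.Ioo (0:ℝ) 1 → ((1 : Matrix (Fin p) (Fin p) ℝ) + t • C).det ≤ 1) :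
    C.trace ≤ 0 := by
  set Q := (Matrix.det (1 + (Polynomial.X : Polynomial ℝ) • C.map Polynomial.C)).divX.divX with hQ
  have key : ∀ t : ℝ, t ∈ Set.Ioo (0:ℝ) 1 → C.trace + Q.eval t * t ≤ 0 := by
    intro t ht
    have := h t ht
    rw [Matrix.det_one_add_smul t C] at this
    have ht0 : 0 < t := ht.1
    nlinarith [this]
  have tendsto : Filter.Tendsto (fun t : ℝ => C.trace + Q.eval t * t) (nhdsWithin 0 (Set.Ioi 0))
      (nhds (C.trace)) := by
    have : Filter.Tendsto (fun t : ℝ => C.trace + Q.eval t * t) (nhds 0)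
        (nhds (C.trace + Q.eval 0 * 0)) := by
      exact (Filter.Tendsto.add tendsto_const_nhds ((Q.continuous_aeval.tendsto 0).mul
        Filter.tendsto_id)).congr (fun x => rfl)
    simpa using this.mono_left nhdsWithin_le_nhds
  refine le_of_tendsto tendsto ?_
  filter_upwards [Ioo_mem_nhdsGT_of_mem (by norm_num : (0:ℝ) ∈ Set.Ico (0:ℝ) 1)] with t ht
  exact key t ht

lemma psd_smul {p : ℕ} {A : Matrix (Fin p) (Fin p) ℝ} (hA : A.PosSemidef) {c : ℝ} (hc : 0 ≤ c) :
    (c • A).PosSemidef := by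
  refine ⟨?_, fun x => ?_⟩
  · show (c • A)ᴴ = c • A
    rw [Matrix.conjTranspose_smul, hA.1.eq]
    simp
  · exact (hA.smul hc).2 x

lemma trace_mul_vecMulVec {p : ℕ} (B : Matrix (Fin p) (Fin p) ℝ) (u : Fin p → ℝ) :
    (B * Matrix.vecMulVec u u).trace = u ⬝ᵥ B *ᵥ u := by
  simp only [Matrix.trace, Matrix.diag, Matrix.mul_apply, Matrix.vecMulVec_apply,
    dotProduct, mulVec, Finset.mul_sum]
  exact Finset.sum_congr rfl fun i _ => Finset.sum_congr rfl fun j _ => by ring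

end matrixAux

section measAux
set_option linter.unusedSectionVars false
variable {s p : ℕ} {X : Set (Fin s → ℝ)} [CompactSpace X] {f : X → Fin p → ℝ}

lemma cont_integrable (ξ : Measure X) [IsFiniteMeasure ξ]
    {g : X → ℝ} (hg : Continuous g) : Integrable g ξ := by
  obtain ⟨C, hC⟩ := IsCompact.exists_bound_of_continuousOn isCompact_univ hg.continuousOn
  exact ⟨hg.aestronglyMeasurable, HasFiniteIntegral.of_bounded
    (C := C) (Filter.Eventually.of_forall fun x => hC x trivial)⟩

lemma cont_apply (hf : Continuous f) (i : Fin p) : Continuous fun x => f x i :=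
  (continuous_apply i).comp hf

lemma cont_quad (hf : Continuous f) (B : Matrix (Fin p) (Fin p) ℝ) :
    Continuous fun x => f x ⬝ᵥ B *ᵥ f x := by
  simp only [dotProduct, mulVec]
  exact continuous_finset_sum _ fun i _ => (cont_apply hf i).mul
    (continuous_finset_sum _ fun j _ => continuous_const.mul (cont_apply hf j))

/-- trace identity -/
lemma trace_infoM_mul (hf : Continuous f) (ξ : Measure X) [IsFiniteMeasure ξ]
    (B : Matrix (Fin p) (Fin p) ℝ) :
    (infoM f ξ * B).trace = ∫ x, f x ⬝ᵥ B *ᵥ f x ∂ξ := by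
  have hint : ∀ i j : Fin p, Integrable (fun x => f x i * f x j * B j i) ξ :=
    fun i j => cont_integrable ξ (((cont_apply hf i).mul (cont_apply hf j)).mul continuous_const)
  calc (infoM f ξ * B).trace = ∑ i, ∑ j, (∫ x, f x i * f x j ∂ξ) * B j i := by
        simp [Matrix.trace, Matrix.diag, Matrix.mul_apply, infoM]
    _ = ∑ i, ∑ j, ∫ x, f x i * f x j * B j i ∂ξ := by
        simp_rw [MeasureTheory.integral_mul_const]
    _ = ∫ x, ∑ i : Fin p, ∑ j : Fin p, f x i * f x j * B j i ∂ξ := by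
        rw [integral_finset_sum _ (fun i _ => integrable_finset_sum _ (fun j _ => hint i j))]
        exact Finset.sum_congr rfl fun i _ => (integral_finset_sum _ (fun j _ => hint i j)).symm
    _ = ∫ x, f x ⬝ᵥ B *ᵥ f x ∂ξ := by
        congr 1; ext x
        rw [Finset.sum_comm]
        simp only [dotProduct, mulVec, Finset.mul_sum]
        congr 1; ext j; congr 1; ext i; ring

lemma infoM_posSemidef (hf : Continuous f) (ξ : Measure X) [IsFiniteMeasure ξ] :
    (infoM f ξ).PosSemidef := by
  rw [Matrix.posSemidef_iff_dotProduct_mulVec]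
  constructor
  · ext i j
    simp only [infoM, Matrix.conjTranspose_apply, Matrix.of_apply, star_trivial]
    congr 1; ext x; ring
  · intro v
    have key : v ⬝ᵥ (infoM f ξ) *ᵥ v = ((infoM f ξ) * Matrix.vecMulVec v v).trace := by
      rw [trace_mul_vecMulVec]
    simp only [star_trivial]
    rw [key, trace_infoM_mul hf]
    refine integral_nonneg fun x => ?_
    show (0:ℝ) ≤ f x ⬝ᵥ (Matrix.vecMulVec v v) *ᵥ f x
    have : f x ⬝ᵥ (Matrix.vecMulVec v v) *ᵥ f x = (f x ⬝ᵥ v) ^ 2 := by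
      simp only [dotProduct, mulVec, Matrix.vecMulVec_apply, Finset.mul_sum, sq,
        Finset.sum_mul]
      exact Finset.sum_congr rfl fun i _ => Finset.sum_congr rfl fun j _ => by ring
    rw [this]
    positivity

lemma infoM_add_smul (hf : Continuous f) (ξ ν : Measure X) [IsFiniteMeasure ξ] [IsFiniteMeasure ν]
    (c d : ℝ) (hc : 0 ≤ c) (hd : 0 ≤ d) :
    infoM f (ENNReal.ofReal c • ξ + ENNReal.ofReal d • ν) = c • infoM f ξ + d • infoM f ν := by
  ext i j
  simp only [infoM, Matrix.of_apply, Matrix.add_apply, Matrix.smul_apply, smul_eq_mul]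
  rw [integral_add_measure, integral_smul_measure, integral_smul_measure,
    ENNReal.toReal_ofReal hc, ENNReal.toReal_ofReal hd]
  · simp
  · exact (cont_integrable ξ ((cont_apply hf i).mul (cont_apply hf j))).smul_measure
      ENNReal.ofReal_ne_top
  · exact (cont_integrable ν ((cont_apply hf i).mul (cont_apply hf j))).smul_measure
      ENNReal.ofReal_ne_top

lemma infoM_dirac (f : X → Fin p → ℝ) (x : X) :
    infoM f (Measure.dirac x) = Matrix.vecMulVec (f x) (f x) := by
  ext i j
  simp only [infoM, Matrix.of_apply, Matrix.vecMulVec_apply]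
  rw [integral_dirac]

end measAux

/-- D-criterion case of the general equivalence theorem for augmented designs. -/
theorem stmt5 {s p : ℕ} (X : Set (Fin s → ℝ)) (hX : IsCompact X)
    (f : X → Fin p → ℝ) (hf : Continuous f)
    (M0 : Matrix (Fin p) (Fin p) ℝ) (hM0 : M0.PosSemidef)
    (a : ℝ) (ha : a ∈ Set.Ioo (0 : ℝ) 1)
    (ξs : Measure X) [IsProbabilityMeasure ξs]
    (hR : (augM f M0 a ξs).PosDef) :
    (∀ ξ : Measure X, IsProbabilityMeasure ξ →
        (augM f M0 a ξ).det ≤ (augM f M0 a ξs).det) ↔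
      ∀ x : X, f x ⬝ᵥ (augM f M0 a ξs)⁻¹ *ᵥ f x ≤
        Matrix.trace (infoM f ξs * (augM f M0 a ξs)⁻¹) := by
  haveI : CompactSpace X := isCompact_iff_compactSpace.mp hX
  obtain ⟨ha0, ha1⟩ := ha
  set R := augM f M0 a ξs with hRdef
  have hRunit : IsUnit R.det := isUnit_iff_ne_zero.mpr hR.det_pos.ne'
  constructor
  · -- optimality → sensitivity bound
    intro hopt x
    set F := Matrix.vecMulVec (f x) (f x) with hF
    set D := a • (F - infoM f ξs) with hD
    have key : ∀ t : ℝ, t ∈ Set.Ioo (0:ℝ) 1 →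
        ((1 : Matrix (Fin p) (Fin p) ℝ) + t • (R⁻¹ * D)).det ≤ 1 := by
      intro t ht
      set ν : Measure X := ENNReal.ofReal (1-t) • ξs + ENNReal.ofReal t • Measure.dirac x with hν
      haveI : IsProbabilityMeasure ν := by
        constructor
        simp only [hν, Measure.add_apply, Measure.smul_apply, measure_univ, smul_eq_mul,
          mul_one]
        rw [← ENNReal.ofReal_add (by linarith [ht.2]) ht.1.le]
        norm_num
      have hM : infoM f ν = (1-t) • infoM f ξs + t • F := by
        rw [hν, infoM_add_smul hf ξs (Measure.dirac x) (1-t) t (by linarith [ht.2]) ht.1.le,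
          infoM_dirac f x, hF]
      have hAug : augM f M0 a ν = R + t • D := by
        rw [augM, hM, hRdef, augM, hD]
        ext i j
        simp only [Matrix.add_apply, Matrix.smul_apply, Matrix.sub_apply, smul_eq_mul]
        ring
      have h1 : (R + t • D).det ≤ R.det := by rw [← hAug]; exact hopt ν inferInstance
      have hfac : R + t • D = R * (1 + t • (R⁻¹ * D)) := by
        rw [mul_add, mul_one, Matrix.mul_smul, ← mul_assoc, Matrix.mul_nonsing_inv _ hRunit,
          one_mul]
      rw [hfac, Matrix.det_mul] at h1
      exact le_of_mul_le_mul_left (by simpa [mul_one] using h1) hR.det_pos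
    have htr0 : (R⁻¹ * D).trace ≤ 0 := trace_nonpos_of_det_le key
    have hexp : (R⁻¹ * D).trace = a * ((R⁻¹ * F).trace - (R⁻¹ * infoM f ξs).trace) := by
      rw [hD, Matrix.mul_smul, Matrix.trace_smul, mul_sub, Matrix.trace_sub]
      simp [mul_sub]
    have hFtr : (R⁻¹ * F).trace = f x ⬝ᵥ R⁻¹ *ᵥ f x := trace_mul_vecMulVec R⁻¹ (f x)
    have hMtr : (R⁻¹ * infoM f ξs).trace = (infoM f ξs * R⁻¹).trace := Matrix.trace_mul_comm _ _
    rw [hexp, hFtr, hMtr] at htr0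
    nlinarith [htr0]
  · -- sensitivity bound → optimality
    intro hsens ξ hξ
    haveI := hξ
    have hpsd : (augM f M0 a ξ).PosSemidef :=
      (psd_smul (infoM_posSemidef hf ξ) ha0.le).add (psd_smul hM0 (by linarith))
    have hle := det_le_det_mul_exp hR hpsd
    have hc : (R⁻¹ * infoM f ξs).trace = ∫ x, f x ⬝ᵥ R⁻¹ *ᵥ f x ∂ξs := by
      rw [Matrix.trace_mul_comm, trace_infoM_mul hf]
    have hint : (R⁻¹ * infoM f ξ).trace ≤ (R⁻¹ * infoM f ξs).trace := by
      rw [Matrix.trace_mul_comm, trace_infoM_mul hf]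
      calc ∫ x, f x ⬝ᵥ R⁻¹ *ᵥ f x ∂ξ
          ≤ ∫ _x, (infoM f ξs * R⁻¹).trace ∂ξ := by
            apply integral_mono (cont_integrable ξ (cont_quad hf R⁻¹)) (integrable_const _)
            exact hsens
        _ = (infoM f ξs * R⁻¹).trace := by simp
        _ = (R⁻¹ * infoM f ξs).trace := Matrix.trace_mul_comm _ _
    have htrRR : (R⁻¹ * R).trace = (p : ℝ) := by
      rw [Matrix.nonsing_inv_mul R hRunit, Matrix.trace_one]
      simp
    have hexp2 : (R⁻¹ * augM f M0 a ξ).trace - (p : ℝ) ≤ 0 := by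
      have e1 : (R⁻¹ * augM f M0 a ξ).trace =
          a * (R⁻¹ * infoM f ξ).trace + (1 - a) * (R⁻¹ * M0).trace := by
        rw [augM, mul_add, Matrix.trace_add, Matrix.mul_smul, Matrix.mul_smul,
          Matrix.trace_smul, Matrix.trace_smul]
        simp
      have e2 : (R⁻¹ * R).trace =
          a * (R⁻¹ * infoM f ξs).trace + (1 - a) * (R⁻¹ * M0).trace := by
        rw [hRdef, augM, mul_add, Matrix.trace_add, Matrix.mul_smul, Matrix.mul_smul,
          Matrix.trace_smul, Matrix.trace_smul]
        simp
      rw [e1]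
      rw [e2] at htrRR
      nlinarith [hint]
    calc (augM f M0 a ξ).det
        ≤ R.det * Real.exp ((R⁻¹ * augM f M0 a ξ).trace - p) := hle
      _ ≤ R.det * 1 := by
          apply mul_le_mul_of_nonneg_left _ hR.det_pos.le
          rw [← Real.exp_zero]
          exact Real.exp_le_exp.mpr hexp2
      _ = R.det := mul_one _
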